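/- arXiv:math/0507483 — 4 statements merged into one kernel-verified Lean document; each statement's English description precedes it below -/
import Mathlib

section
/- Let m ≥ 1 and let q₀, q₁, p₀, p₁ ∈ ℝ^m. Set a = (q₀, p₀), b = (q₁, p₁), c = (q₀, p₁) in ℝ^m × ℝ^m. For each ordered pair (u, v) of points, parametrize the straight segment from u to v by γ(t) = (1−t)u + tv, t ∈ [0,1], and define its action by ∫₀¹ ½⟨γ(t), J γ′(t)⟩ dt. Then the sum of the actions of the three segments a→b, b→c, c→a (the boundary of the triangle with these vertices, traversed in this order) equals ½⟨q₁ − q₀, p₁ − p₀⟩. -/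
noncomputable section

open scoped RealInnerProductSpace

/-- `ℝ^m` with the Euclidean inner product. -/
abbrev V (m : ℕ) : Type := EuclideanSpace ℝ (Fin m)

/-- Phase space `ℝ^m × ℝ^m ≅ ℝ^(2m)`, with the Euclidean (`L²`) inner product. -/
abbrev Phase (m : ℕ) : Type := WithLp 2 (V m × V m)

/-- The identification `Phase m ≃ ℝ^m × ℝ^m`. -/
def e (m : ℕ) : Phase m ≃L[ℝ] V m × V m := WithLp.prodContinuousLinearEquiv 2 ℝ (V m) (V m)

/-- The point `z = (q, p)` of phase space. -/
def pt {m : ℕ} (q p : V m) : Phase m := (e m).symm (q, p)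

/-- The position (`q`) part of a phase-space point. -/
def qpart {m : ℕ} (z : Phase m) : V m := ((e m) z).1

/-- The momentum (`p`) part of a phase-space point. -/
def ppart {m : ℕ} (z : Phase m) : V m := ((e m) z).2

/-- The standard symplectic matrix `J`, acting by `J (q, p) = (p, -q)`. -/
def Jmap {m : ℕ} : Phase m →L[ℝ] Phase m :=
  ((e m).symm : V m × V m →L[ℝ] Phase m).comp
    (((ContinuousLinearMap.snd ℝ (V m) (V m)).prod
      (-(ContinuousLinearMap.fst ℝ (V m) (V m)))).comp ((e m) : Phase m →L[ℝ] V m × V m))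

/-- The Hessian of `H` at `z`, viewed as a linear map: the derivative of the gradient. -/
def hess {m : ℕ} (H : Phase m → ℝ) (z : Phase m) : Phase m →L[ℝ] Phase m :=
  fderiv ℝ (gradient H) z

/-- `ψ_H(z) = ⟨J ∇H(z), (Hess H(z)) (J ∇H(z))⟩`. -/
def psi {m : ℕ} (H : Phase m → ℝ) (z : Phase m) : ℝ :=
  ⟪Jmap (gradient H z), hess H z (Jmap (gradient H z))⟫

/-- The action `∫₀¹ ½⟨γ(t), J γ'(t)⟩ dt` of the straight segment
`γ(t) = (1-t)•u + t•v`, `t ∈ [0,1]`, from `u` to `v` (so `γ'(t) = v - u`). -/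
def segAction {m : ℕ} (u v : Phase m) : ℝ :=
  ∫ t in (0:ℝ)..1, (1 / 2 : ℝ) * ⟪(1 - t) • u + t • v, Jmap (v - u)⟫

lemma integral_lin_aux (A B : ℝ) :
    (∫ t in (0:ℝ)..1, (1/2:ℝ)*((1-t)*A + t*B)) = (A+B)/4 := by
  have key : ∀ t ∈ Set.uIcc (0:ℝ) 1,
      HasDerivAt (fun t : ℝ => A/2*t + (B-A)/4*t^2) ((1/2:ℝ)*((1-t)*A + t*B)) t := by
    intro t _
    have h := ((hasDerivAt_id t).const_mul (A/2)).add
      (((hasDerivAt_pow 2 t)).const_mul ((B-A)/4))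
    exact h.congr_deriv (by norm_num; ring)
  rw [intervalIntegral.integral_eq_sub_of_hasDerivAt key
    (Continuous.intervalIntegrable (by fun_prop) _ _)]
  ring

lemma segAction_eq {m : ℕ} (u v : Phase m) :
    segAction u v = (⟪u, Jmap (v - u)⟫ + ⟪v, Jmap (v - u)⟫)/4 := by
  have h : ∀ t : ℝ, (1 / 2 : ℝ) * ⟪(1 - t) • u + t • v, Jmap (v - u)⟫
      = (1/2:ℝ)*((1-t)*⟪u, Jmap (v - u)⟫ + t*⟪v, Jmap (v - u)⟫) := by
    intro t; rw [inner_add_left, real_inner_smul_left, real_inner_smul_left]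
  unfold segAction
  simp only [h]
  exact integral_lin_aux _ _

lemma inner_J_pt {m : ℕ} (q p q' p' : V m) :
    ⟪pt q p, Jmap (pt q' p')⟫ = ⟪q,p'⟫ - ⟪p,q'⟫ := by
  simp [Jmap, pt, e, WithLp.prod_inner_apply, sub_eq_add_neg]

lemma pt_sub {m : ℕ} (q p q' p' : V m) : pt q p - pt q' p' = pt (q-q') (p-p') := by
  simp [pt, ← map_sub]

/-- The sum of the actions of the three straight segments
`a → b`, `b → c`, `c → a`, where `a = (q₀, p₀)`, `b = (q₁, p₁)`, `c = (q₀, p₁)`,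
equals `½⟨q₁ - q₀, p₁ - p₀⟩`. -/
theorem action_of_triangle_boundary (m : ℕ) (hm : 1 ≤ m) (q₀ q₁ p₀ p₁ : V m)
    (a b c : Phase m) (ha : a = pt q₀ p₀) (hb : b = pt q₁ p₁) (hc : c = pt q₀ p₁) :
    segAction a b + segAction b c + segAction c a
      = (1 / 2 : ℝ) * ⟪q₁ - q₀, p₁ - p₀⟫ := by
  subst ha hb hc
  simp only [segAction_eq, pt_sub, inner_J_pt, inner_sub_left, inner_sub_right,
    real_inner_comm p₀ q₀, real_inner_comm p₀ q₁, real_inner_comm p₁ q₀,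
    real_inner_comm p₁ q₁]
  ring
end
end

section
/- Let m ≥ 1, let 𝓗 : ℝ^m × ℝ^m → ℝ be three times continuously differentiable, and define ψ(z) = ⟨J∇𝓗(z), (Hess 𝓗(z))(J∇𝓗(z))⟩. Let c ∈ ℝ, let U ⊆ ℝ^m × ℝ^m be open, and let p₀ : U → ℝ^m, q₁ : U → ℝ^m, λ : U → ℝ, μ : U → ℝ be differentiable functions such that for every (q, P) ∈ U, writing z₀ = (q, p₀(q,P)), z₁ = (q₁(q,P), P), z̄ = (z₀ + z₁)/2: (i) z₁ − z₀ = λ(q,P) J∇𝓗(z̄) + μ(q,P) J∇ψ(z̄); (ii) 𝓗(z̄) = 0; (iii) μ(q,P)·(ψ(z̄) − c) = 0; and (iv) μ(q,P) and ψ(z̄) − c are not both zero. Define S : U → ℝ by S(q,P) = ⟨q, P⟩ + ½⟨q₁(q,P) − q, P − p₀(q,P)⟩ + λ(q,P) 𝓗(z̄) + μ(q,P)(ψ(z̄) − c). Then for every (q,P) ∈ U, the partial gradient of S with respect to q equals p₀(q,P), and the partial gradient of S with respect to P equals q₁(q,P). -/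
noncomputable section

open scoped RealInnerProductSpace Topology

lemma Jmap_Jmap {m : ℕ} (z : Phase m) : Jmap (Jmap z) = -z := by
  simp only [Jmap, ContinuousLinearMap.coe_comp', Function.comp_apply,
    ContinuousLinearEquiv.coe_coe, ContinuousLinearMap.prod_apply,
    ContinuousLinearMap.coe_snd', ContinuousLinearMap.neg_apply,
    ContinuousLinearMap.coe_fst', ContinuousLinearEquiv.apply_symm_apply]
  have : ((-((e m) z).1, -((e m) z).2) : V m × V m) = -((e m) z) := rfl
  rw [this, map_neg, (e m).symm_apply_apply]

lemma Jmap_e_symm {m : ℕ} (a b : V m) :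
    Jmap ((e m).symm (a, b)) = (e m).symm (b, -a) := by
  simp [Jmap]

lemma inner_e_symm {m : ℕ} (a b c d : V m) :
    ⟪(e m).symm (a, b), (e m).symm (c, d)⟫ = ⟪a, c⟫ + ⟪b, d⟫ := by
  simp [e, WithLp.prod_inner_apply]

lemma grad_contDiff {m : ℕ} {H : Phase m → ℝ} (h : ContDiff ℝ 3 H) :
    ContDiff ℝ 2 (gradient H) := by
  have : gradient H = fun z => (InnerProductSpace.toDual ℝ (Phase m)).symm (fderiv ℝ H z) := rfl
  rw [this]
  exact ((InnerProductSpace.toDual ℝ (Phase m)).symm.contDiff).comp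
    (h.fderiv_right (by norm_num))

lemma psi_contDiff {m : ℕ} {H : Phase m → ℝ} (h : ContDiff ℝ 3 H) :
    ContDiff ℝ 1 (psi H) := by
  have hg := grad_contDiff h
  have hhess : ContDiff ℝ 1 (hess H) := hg.fderiv_right (by norm_num)
  have hJg : ContDiff ℝ 1 fun z => Jmap (gradient H z) :=
    (Jmap.contDiff).comp (hg.of_le (by norm_num))
  exact hJg.inner ℝ (hhess.clm_apply hJg)

set_option maxHeartbeats 2000000 in
/-- generating function of the regularized DTH step.
If on an open set `U` of points `(q, P)` the functions `p₀, q₁, λ, μ` are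
differentiable and satisfy the regularized DTH step equations (with `μ` and
`ψ(z̄) - c` never simultaneously zero), then the generating function
`S(q,P) = ⟨q,P⟩ + ½⟨q₁ - q, P - p₀⟩ + λ𝓗(z̄) + μ(ψ(z̄) - c)` satisfies
`S_q = p₀` and `S_P = q₁` (partial gradients). -/
theorem dth_generating_function (m : ℕ) (hm : 1 ≤ m)
    (𝓗 : Phase m → ℝ) (h𝓗 : ContDiff ℝ 3 𝓗) (c : ℝ)
    (U : Set (V m × V m)) (hU : IsOpen U)
    (p₀ q₁ : V m × V m → V m) (lam mu : V m × V m → ℝ)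
    (hp₀ : DifferentiableOn ℝ p₀ U) (hq₁ : DifferentiableOn ℝ q₁ U)
    (hlam : DifferentiableOn ℝ lam U) (hmu : DifferentiableOn ℝ mu U)
    (z₀ z₁ zbar : V m × V m → Phase m)
    (hz₀ : ∀ x : V m × V m, z₀ x = pt x.1 (p₀ x))
    (hz₁ : ∀ x : V m × V m, z₁ x = pt (q₁ x) x.2)
    (hzbar : ∀ x : V m × V m, zbar x = (2:ℝ)⁻¹ • (z₀ x + z₁ x))
    (hstep : ∀ x ∈ U, z₁ x - z₀ x
      = lam x • Jmap (gradient 𝓗 (zbar x)) + mu x • Jmap (gradient (psi 𝓗) (zbar x)))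
    (hcon : ∀ x ∈ U, 𝓗 (zbar x) = 0)
    (hcomp : ∀ x ∈ U, mu x * (psi 𝓗 (zbar x) - c) = 0)
    (hnondeg : ∀ x ∈ U, ¬(mu x = 0 ∧ psi 𝓗 (zbar x) - c = 0))
    (S : V m × V m → ℝ)
    (hS : ∀ x : V m × V m,
      S x = ⟪x.1, x.2⟫ + (1 / 2 : ℝ) * ⟪q₁ x - x.1, x.2 - p₀ x⟫
        + lam x * 𝓗 (zbar x) + mu x * (psi 𝓗 (zbar x) - c)) :
    ∀ x ∈ U,
      gradient (fun q : V m => S (q, x.2)) x.1 = p₀ x ∧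
      gradient (fun P : V m => S (x.1, P)) x.2 = q₁ x := by
  intro x hx
  have hUx : U ∈ 𝓝 x := hU.mem_nhds hx
  have hmem : ∀ᶠ y in 𝓝 x, y ∈ U := hUx
  set A := fderiv ℝ q₁ x with hAdef
  set B := fderiv ℝ p₀ x with hBdef
  have hAd : HasFDerivAt q₁ A x := (hq₁.differentiableAt hUx).hasFDerivAt
  have hBd : HasFDerivAt p₀ B x := (hp₀.differentiableAt hUx).hasFDerivAt
  set E : V m × V m →L[ℝ] Phase m := ((e m).symm : V m × V m →L[ℝ] Phase m) with hEdef
  set D₀ := E.comp ((ContinuousLinearMap.fst ℝ (V m) (V m)).prod B) with hD₀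
  set D₁ := E.comp (A.prod (ContinuousLinearMap.snd ℝ (V m) (V m))) with hD₁
  have hz₀d : HasFDerivAt z₀ D₀ x := by
    have h : z₀ = fun y => E (y.1, p₀ y) := funext fun y => by
      rw [hz₀ y]; rfl
    rw [h]
    exact E.hasFDerivAt.comp x (hasFDerivAt_fst.prodMk hBd)
  have hz₁d : HasFDerivAt z₁ D₁ x := by
    have h : z₁ = fun y => E (q₁ y, y.2) := funext fun y => by
      rw [hz₁ y]; rfl
    rw [h]
    exact E.hasFDerivAt.comp x (hAd.prodMk hasFDerivAt_snd)
  set Dz := (2:ℝ)⁻¹ • (D₀ + D₁) with hDzdef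
  have hzd : HasFDerivAt zbar Dz x := by
    have h : zbar = fun y => (2:ℝ)⁻¹ • (z₀ y + z₁ y) := funext hzbar
    rw [h]
    exact (hz₀d.add hz₁d).const_smul (2:ℝ)⁻¹
  -- pairing principle
  have hpair : ∀ (f : Phase m → ℝ), Differentiable ℝ f →
      (∀ᶠ y in 𝓝 x, f (zbar y) = f (zbar x)) →
      ∀ u, ⟪gradient f (zbar x), Dz u⟫ = 0 := by
    intro f hf hev u
    have hchain : HasFDerivAt (fun y => f (zbar y)) ((fderiv ℝ f (zbar x)).comp Dz) x :=
      (hf (zbar x)).hasFDerivAt.comp x hzd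
    have hconst : HasFDerivAt (fun y => f (zbar y)) (0 : V m × V m →L[ℝ] ℝ) x :=
      (hasFDerivAt_const (f (zbar x)) x).congr_of_eventuallyEq hev
    have h1 : (fderiv ℝ f (zbar x)).comp Dz = 0 := hchain.unique hconst
    have h2 : fderiv ℝ f (zbar x)
        = InnerProductSpace.toDual ℝ (Phase m) (gradient f (zbar x)) :=
      ((InnerProductSpace.toDual ℝ (Phase m)).apply_symm_apply _).symm
    have h3 := congrArg (fun (L : V m × V m →L[ℝ] ℝ) => L u) h1
    simpa only [ContinuousLinearMap.comp_apply, ContinuousLinearMap.zero_apply, h2,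
      InnerProductSpace.toDual_apply_apply] using h3
  have h𝓗diff : Differentiable ℝ 𝓗 := h𝓗.differentiable (by norm_num)
  have hHev : ∀ᶠ y in 𝓝 x, 𝓗 (zbar y) = 𝓗 (zbar x) := by
    filter_upwards [hmem] with y hy
    rw [hcon y hy, hcon x hx]
  have key𝓗 : ∀ u, ⟪gradient 𝓗 (zbar x), Dz u⟫ = 0 := hpair 𝓗 h𝓗diff hHev
  have keyμ : ∀ u, mu x * ⟪gradient (psi 𝓗) (zbar x), Dz u⟫ = 0 := by
    rcases eq_or_ne (mu x) 0 with h0 | h0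
    · intro u; rw [h0, zero_mul]
    · have hμc : ContinuousAt mu x := (hmu.differentiableAt hUx).continuousAt
      have hμne : ∀ᶠ y in 𝓝 x, mu y ≠ 0 := hμc.eventually_ne h0
      have hψev : ∀ᶠ y in 𝓝 x, psi 𝓗 (zbar y) = psi 𝓗 (zbar x) := by
        filter_upwards [hmem, hμne] with y hyU hyμ
        have hy' : psi 𝓗 (zbar y) - c = 0 :=
          (mul_eq_zero.mp (hcomp y hyU)).resolve_left hyμ
        have hx' : psi 𝓗 (zbar x) - c = 0 :=
          (mul_eq_zero.mp (hcomp x hx)).resolve_left h0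
        rw [sub_eq_zero] at hy' hx'
        rw [hy', hx']
      intro u
      rw [hpair (psi 𝓗) ((psi_contDiff h𝓗).differentiable one_ne_zero) hψev u, mul_zero]
  have key : ∀ u, ⟪Jmap (z₁ x - z₀ x), Dz u⟫ = 0 := by
    intro u
    rw [hstep x hx, map_add, map_smul, map_smul, Jmap_Jmap, Jmap_Jmap,
      inner_add_left, real_inner_smul_left, real_inner_smul_left,
      inner_neg_left, inner_neg_left, key𝓗 u]
    have := keyμ u
    linarith
  have hz10 : z₁ x - z₀ x = (e m).symm (q₁ x - x.1, x.2 - p₀ x) := by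
    rw [hz₁ x, hz₀ x, pt, pt, ← map_sub, Prod.mk_sub_mk]
  have hDzu : ∀ u : V m × V m, Dz u = (e m).symm
      ((2:ℝ)⁻¹ • (u.1 + A u), (2:ℝ)⁻¹ • (B u + u.2)) := by
    intro u
    rw [hDzdef]
    simp only [ContinuousLinearMap.smul_apply, ContinuousLinearMap.add_apply, hD₀, hD₁,
      ContinuousLinearMap.comp_apply, ContinuousLinearMap.prod_apply,
      ContinuousLinearMap.coe_fst', ContinuousLinearMap.coe_snd', hEdef,
      ContinuousLinearEquiv.coe_coe]
    rw [← map_add, ← map_smul]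
    congr 1
  have coordKey : ∀ u : V m × V m,
      ⟪x.2 - p₀ x, u.1 + A u⟫ = ⟪q₁ x - x.1, B u + u.2⟫ := by
    intro u
    have h := key u
    rw [hz10, Jmap_e_symm, hDzu u, inner_e_symm, inner_neg_left,
      real_inner_smul_right, real_inner_smul_right] at h
    linarith
  -- the reduced generating function
  set T : V m × V m → ℝ :=
    fun y => ⟪y.1, y.2⟫ + (1 / 2 : ℝ) * ⟪q₁ y - y.1, y.2 - p₀ y⟫ with hTdef
  have hST : S =ᶠ[𝓝 x] T := by
    filter_upwards [hmem] with y hy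
    rw [hS y, hcon y hy, hcomp y hy, mul_zero]
    ring
  set D' : V m × V m →L[ℝ] ℝ :=
    ((fderivInnerCLM ℝ (x.1, x.2)).comp
      ((ContinuousLinearMap.fst ℝ (V m) (V m)).prod (ContinuousLinearMap.snd ℝ (V m) (V m))))
    + (1 / 2 : ℝ) • ((fderivInnerCLM ℝ (q₁ x - x.1, x.2 - p₀ x)).comp
      ((A - ContinuousLinearMap.fst ℝ (V m) (V m)).prod
        (ContinuousLinearMap.snd ℝ (V m) (V m) - B))) with hD'def
  have hTd : HasFDerivAt T D' x := by
    have hf1 : HasFDerivAt (fun y : V m × V m => (⟪y.1, y.2⟫ : ℝ))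
        ((fderivInnerCLM ℝ (x.1, x.2)).comp
          ((ContinuousLinearMap.fst ℝ (V m) (V m)).prod
            (ContinuousLinearMap.snd ℝ (V m) (V m)))) x :=
      HasFDerivAt.inner ℝ hasFDerivAt_fst hasFDerivAt_snd
    have hf2 : HasFDerivAt (fun y : V m × V m => (⟪q₁ y - y.1, y.2 - p₀ y⟫ : ℝ))
        ((fderivInnerCLM ℝ (q₁ x - x.1, x.2 - p₀ x)).comp
          ((A - ContinuousLinearMap.fst ℝ (V m) (V m)).prod
            (ContinuousLinearMap.snd ℝ (V m) (V m) - B))) x :=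
      HasFDerivAt.inner ℝ (hAd.sub hasFDerivAt_fst) (hasFDerivAt_snd.sub hBd)
    exact hf1.add (hf2.const_mul (1 / 2 : ℝ))
  have hSd : HasFDerivAt S D' x := hTd.congr_of_eventuallyEq hST
  set Dfull : V m × V m →L[ℝ] ℝ :=
    ((innerSL ℝ (p₀ x)).comp (ContinuousLinearMap.fst ℝ (V m) (V m)))
    + ((innerSL ℝ (q₁ x)).comp (ContinuousLinearMap.snd ℝ (V m) (V m))) with hDfulldef
  have hEq : D' = Dfull := by
    apply ContinuousLinearMap.ext
    intro u
    have hc := coordKey u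
    simp only [hD'def, hDfulldef, ContinuousLinearMap.add_apply,
      ContinuousLinearMap.smul_apply, ContinuousLinearMap.comp_apply,
      ContinuousLinearMap.prod_apply, ContinuousLinearMap.sub_apply,
      ContinuousLinearMap.coe_fst', ContinuousLinearMap.coe_snd',
      fderivInnerCLM_apply, innerSL_apply_apply, smul_eq_mul]
    simp only [inner_sub_left, inner_sub_right, inner_add_left, inner_add_right] at hc ⊢
    linarith [real_inner_comm u.1 x.2, real_inner_comm (A u) x.2,
      real_inner_comm (A u) (p₀ x), real_inner_comm u.1 (p₀ x)]
  have hSD : HasFDerivAt S Dfull x := hEq ▸ hSd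
  have hSD' : HasFDerivAt S Dfull (x.1, x.2) := by rwa [Prod.mk.eta]
  constructor
  · have hin : HasFDerivAt (fun q : V m => (q, x.2))
        ((ContinuousLinearMap.id ℝ (V m)).prod 0) x.1 :=
      (hasFDerivAt_id x.1).prodMk (hasFDerivAt_const x.2 x.1)
    have hcq : HasFDerivAt (fun q : V m => S (q, x.2))
        (Dfull.comp ((ContinuousLinearMap.id ℝ (V m)).prod 0)) x.1 := hSD'.comp x.1 hin
    have hg : HasGradientAt (fun q : V m => S (q, x.2)) (p₀ x) x.1 := by
      rw [hasGradientAt_iff_hasFDerivAt]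
      refine hcq.congr_fderiv ?_
      apply ContinuousLinearMap.ext
      intro v
      simp [hDfulldef, InnerProductSpace.toDual_apply_apply]
    exact hg.gradient
  · have hin : HasFDerivAt (fun P : V m => (x.1, P))
        ((0 : V m →L[ℝ] V m).prod (ContinuousLinearMap.id ℝ (V m))) x.2 :=
      (hasFDerivAt_const x.1 x.2).prodMk (hasFDerivAt_id x.2)
    have hcq : HasFDerivAt (fun P : V m => S (x.1, P))
        (Dfull.comp ((0 : V m →L[ℝ] V m).prod (ContinuousLinearMap.id ℝ (V m)))) x.2 :=
      hSD'.comp x.2 hin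
    have hg : HasGradientAt (fun P : V m => S (x.1, P)) (q₁ x) x.2 := by
      rw [hasGradientAt_iff_hasFDerivAt]
      refine hcq.congr_fderiv ?_
      apply ContinuousLinearMap.ext
      intro v
      simp [hDfulldef, InnerProductSpace.toDual_apply_apply]
    exact hg.gradient
end
end

section
/- Let m ≥ 1 and d = 2m. Let A be a symmetric d × d real matrix, b ∈ ℝ^d, c ∈ ℝ, and define the quadratic function L(z) = ½⟨z, Az⟩ + ⟨b, z⟩ + c. Let H : ℝ^d → ℝ be three times continuously differentiable and define ψ(z) = ⟨J∇H(z), (Hess H(z))(J∇H(z))⟩. If the Poisson bracket [L, H](z) = ⟨∇L(z), J∇H(z)⟩ vanishes for all z ∈ ℝ^d, then the Poisson bracket [L, ψ](z) = ⟨∇L(z), J∇ψ(z)⟩ also vanishes for all z ∈ ℝ^d. -/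
noncomputable section

open scoped RealInnerProductSpace

section Generic
variable {E : Type*} [NormedAddCommGroup E] [InnerProductSpace ℝ E] [CompleteSpace E]

lemma grad_inner (f : E → ℝ) (x v : E) : ⟪gradient f x, v⟫ = fderiv ℝ f x v := by
  rw [gradient, InnerProductSpace.toDual_symm_apply]

lemma contDiff_gradient (H : E → ℝ) (hH : ContDiff ℝ 3 H) :
    ContDiff ℝ 2 (gradient H) := by
  have h1 : ContDiff ℝ 2 (fderiv ℝ H) := hH.fderiv_right (by norm_num)
  have : gradient H = fun x => (InnerProductSpace.toDual ℝ E).symm (fderiv ℝ H x) := rfl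
  rw [this]
  exact ((InnerProductSpace.toDual ℝ E).symm.contDiff).comp h1

lemma hess_symm (H : E → ℝ) (hH : ContDiff ℝ 3 H) (z v w : E) :
    ⟪fderiv ℝ (gradient H) z v, w⟫ = ⟪fderiv ℝ (gradient H) z w, v⟫ := by
  have hg : ContDiff ℝ 2 (gradient H) := contDiff_gradient H hH
  have hgd : Differentiable ℝ (gradient H) := hg.differentiable (by norm_num)
  have key : ∀ a : E, fderiv ℝ (fun y => ⟪gradient H y, a⟫) z
      = (fderiv ℝ (fderiv ℝ H) z).flip a := by
    intro a
    have h1 : (fun y => ⟪gradient H y, a⟫) = fun y => fderiv ℝ H y a := by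
      funext y; exact grad_inner H y a
    rw [h1]
    have hc : DifferentiableAt ℝ (fderiv ℝ H) z :=
      ((hH.fderiv_right (m := 2) (by norm_num)).differentiable (by norm_num)) z
    rw [fderiv_clm_apply hc (differentiableAt_const a)]
    ext u; simp
  have e1 : ∀ a u : E, ⟪fderiv ℝ (gradient H) z u, a⟫ = fderiv ℝ (fderiv ℝ H) z u a := by
    intro a u
    have := fderiv_inner_apply (𝕜 := ℝ) (hgd z) (differentiableAt_const a) u
    rw [key a] at this
    simpa using this.symm
  rw [e1 w v, e1 v w]
  exact (hH.contDiffAt.isSymmSndFDerivAt (by norm_num)) v w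

/-- The key computation: if `⟨∇H, J(Az+b₀)⟩ ≡ 0` then the derivative of
`ψ` along the vector field `X z = J(Az+b₀)` vanishes. -/
lemma key_vanish (J A : E →L[ℝ] E) (hJ : ∀ a c : E, ⟪J a, c⟫ = -⟪a, J c⟫)
    (hA : ∀ v w : E, ⟪A v, w⟫ = ⟪v, A w⟫) (b₀ : E)
    (H : E → ℝ) (hH : ContDiff ℝ 3 H)
    (hb : ∀ y : E, ⟪gradient H y, J (A y + b₀)⟫ = 0) (z : E) :
    fderiv ℝ (fun y => ⟪J (gradient H y),
      fderiv ℝ (gradient H) y (J (gradient H y))⟫) z (J (A z + b₀)) = 0 := by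
  set g := gradient H with hgdef
  set S : E → E →L[ℝ] E := fderiv ℝ g with hSdef
  set X : E → E := fun y => J (A y + b₀) with hXdef
  set K : E →L[ℝ] E := J.comp A with hKdef
  have hg : ContDiff ℝ 2 g := contDiff_gradient H hH
  have hgd : Differentiable ℝ g := hg.differentiable (by norm_num)
  have hS : ContDiff ℝ 1 S := hg.fderiv_right (by norm_num)
  have hSd : Differentiable ℝ S := hS.differentiable (by norm_num)
  have hsymm : ∀ y v w : E, ⟪S y v, w⟫ = ⟪S y w, v⟫ := fun y v w => hess_symm H hH y v w
  have hX : ∀ y : E, HasFDerivAt X K y := by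
    intro y
    exact J.hasFDerivAt.comp y ((A.hasFDerivAt (x := y)).add_const b₀)
  have hXd : Differentiable ℝ X := fun y => (hX y).differentiableAt
  -- first differentiation of the bracket identity
  have stepC : ∀ y v : E, ⟪S y v, X y⟫ + ⟪g y, K v⟫ = 0 := by
    intro y v
    have hzero : (fun y => ⟪g y, X y⟫) = fun _ => (0 : ℝ) := funext hb
    have h1 : fderiv ℝ (fun y => ⟪g y, X y⟫) y v = 0 := by
      rw [hzero]; simp
    rw [fderiv_inner_apply (𝕜 := ℝ) (hgd y) (hXd y) v, (hX y).fderiv] at h1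
    show ⟪fderiv ℝ g y v, X y⟫ + ⟪g y, K v⟫ = 0
    linarith [h1]
  -- second differentiation
  have stepD : ∀ y v w : E,
      ⟪fderiv ℝ S y w v, X y⟫ + ⟪S y v, K w⟫ + ⟪S y w, K v⟫ = 0 := by
    intro y v w
    have hSvd : ∀ y : E, DifferentiableAt ℝ (fun y => S y v) y :=
      fun y => (hSd y).clm_apply (differentiableAt_const v)
    have hzero : (fun y => ⟪S y v, X y⟫ + ⟪g y, K v⟫) = fun _ => (0 : ℝ) :=
      funext fun y => stepC y v
    have h1 : fderiv ℝ (fun y => ⟪S y v, X y⟫ + ⟪g y, K v⟫) y w = 0 := by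
      rw [hzero]; simp
    rw [fderiv_fun_add ((hSvd y).inner ℝ (hXd y))
      ((hgd y).inner ℝ (differentiableAt_const (K v)))] at h1
    rw [ContinuousLinearMap.add_apply] at h1
    rw [fderiv_inner_apply (𝕜 := ℝ) (hSvd y) (hXd y) w, (hX y).fderiv] at h1
    rw [fderiv_inner_apply (𝕜 := ℝ) (hgd y) (differentiableAt_const (K v)) w] at h1
    rw [fderiv_clm_apply (hSd y) (differentiableAt_const v)] at h1
    simp only [ContinuousLinearMap.add_apply, ContinuousLinearMap.comp_apply,
      ContinuousLinearMap.flip_apply, fderiv_const, fderiv_fun_const, Pi.zero_apply,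
      ContinuousLinearMap.zero_apply, map_zero, inner_zero_right, add_zero, zero_add] at h1
    have hc : ⟪g y, fderiv ℝ g y w⟫ = ⟪S y w, g y⟫ := real_inner_comm _ _
    show ⟪fderiv ℝ S y w v, X y⟫ + ⟪fderiv ℝ g y v, K w⟫ + ⟪fderiv ℝ g y w, K v⟫ = 0
    linarith [h1]
  -- symmetry of the third derivative in the last two slots
  have hsym23 : ∀ a v w : E, ⟪fderiv ℝ S z a v, w⟫ = ⟪fderiv ℝ S z a w, v⟫ := by
    intro a v w
    have heq : (fun y => ⟪S y v, w⟫) = fun y => ⟪S y w, v⟫ := by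
      funext y; exact hsymm y v w
    have hcalc : ∀ p q : E, fderiv ℝ (fun y => ⟪S y p, q⟫) z a = ⟪fderiv ℝ S z a p, q⟫ := by
      intro p q
      rw [fderiv_inner_apply (𝕜 := ℝ) ((hSd z).clm_apply (differentiableAt_const p))
        (differentiableAt_const q) a]
      rw [fderiv_clm_apply (hSd z) (differentiableAt_const p)]
      simp
    have hcle : fderiv ℝ (fun y => ⟪S y v, w⟫) z = fderiv ℝ (fun y => ⟪S y w, v⟫) z := by
      rw [heq]
    have happ := congrArg (fun (L : E →L[ℝ] ℝ) => L a) hcle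
    simpa only [hcalc v w, hcalc w v] using happ
  -- symmetry in the first two slots
  have hsym12 : ∀ v w : E, fderiv ℝ S z v w = fderiv ℝ S z w v := by
    intro v w
    exact (hg.contDiffAt.isSymmSndFDerivAt (by norm_num)) v w
  -- S z (X z) = A (J (g z))
  have stepL7 : S z (X z) = A (J (g z)) := by
    apply ext_inner_right ℝ
    intro w
    rw [hsymm z (X z) w]
    have h1 := stepC z w
    have h2 : ⟪g z, K w⟫ = -⟪J (g z), A w⟫ := by
      have e0 : ⟪g z, K w⟫ = ⟪J (A w), g z⟫ := by
        rw [real_inner_comm]; rfl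
      rw [e0, hJ (A w) (g z), real_inner_comm]
    rw [hA (J (g z)) w]
    linarith [h1, h2]
  -- final assembly
  have hud : ∀ y : E, DifferentiableAt ℝ (fun y => J (g y)) y :=
    fun y => J.differentiableAt.comp y (hgd y)
  have hasu : ∀ y : E, HasFDerivAt (fun y => J (g y)) (J.comp (S y)) y :=
    fun y => J.hasFDerivAt.comp y (hgd y).hasFDerivAt
  have hTd : DifferentiableAt ℝ (fun y => S y (J (g y))) z :=
    (hSd z).clm_apply (hud z)
  rw [fderiv_inner_apply (𝕜 := ℝ) (hud z) hTd (X z)]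
  rw [fderiv_clm_apply (hSd z) (hud z), (hasu z).fderiv]
  simp only [ContinuousLinearMap.add_apply, ContinuousLinearMap.comp_apply,
    ContinuousLinearMap.flip_apply]
  have hSX : S z (X z) = A (J (g z)) := stepL7
  rw [hSX]
  set u : E := J (g z) with hudef
  rw [inner_add_right]
  have f1 : ⟪u, S z (J (A u))⟫ = ⟪S z u, J (A u)⟫ := by
    rw [real_inner_comm]; exact hsymm z (J (A u)) u
  have f2 : ⟪J (A u), S z u⟫ = ⟪S z u, J (A u)⟫ := real_inner_comm _ _
  have f3 : ⟪u, fderiv ℝ S z (X z) u⟫ = -⟪S z u, K u⟫ - ⟪S z u, K u⟫ := by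
    have e1 : ⟪u, fderiv ℝ S z (X z) u⟫ = ⟪fderiv ℝ S z (X z) u, u⟫ := real_inner_comm _ _
    rw [e1, hsym12 (X z) u, hsym23 u (X z) u]
    have := stepD z u u
    linarith [this]
  have hKu : K u = J (A u) := rfl
  rw [← hKu]
  rw [← hKu] at f1 f2
  linarith [f1, f2, f3]

section GlueLemmas
variable {E : Type*} [NormedAddCommGroup E] [InnerProductSpace ℝ E] [CompleteSpace E]

/-- Skew-adjointness of the symplectic matrix `J`. -/
lemma Jmap_skew {m : ℕ} (a c : Phase m) : ⟪Jmap a, c⟫ = -⟪a, Jmap c⟫ := by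
  show ⟪a.snd, c.fst⟫ + ⟪-a.fst, c.snd⟫ = -(⟪a.fst, c.snd⟫ + ⟪a.snd, -c.fst⟫)
  simp only [inner_neg_left, inner_neg_right]
  ring

/-- The gradient of a quadratic function. -/
lemma gradient_quadratic (A : E →L[ℝ] E) (hA : ∀ v w : E, ⟪A v, w⟫ = ⟪v, A w⟫) (b : E) (c : ℝ)
    (L : E → ℝ) (hL : ∀ z : E, L z = (1 / 2 : ℝ) * ⟪z, A z⟫ + ⟪b, z⟫ + c) (z : E) :
    gradient L z = A z + b := by
  have hLfun : L = fun y => (1 / 2 : ℝ) * ⟪y, A y⟫ + ⟪b, y⟫ + c := funext hL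
  have h1 : HasFDerivAt (fun y : E => ⟪y, A y⟫)
      ((fderivInnerCLM ℝ (z, A z)).comp ((ContinuousLinearMap.id ℝ E).prod A)) z :=
    (hasFDerivAt_id z).inner ℝ (A.hasFDerivAt)
  have h3 : HasFDerivAt L ((1/2 : ℝ) •
      ((fderivInnerCLM ℝ (z, A z)).comp ((ContinuousLinearMap.id ℝ E).prod A))
      + innerSL ℝ b) z := by
    rw [hLfun]
    have h4 := (h1.const_mul ((1:ℝ)/2)).add ((innerSL ℝ b).hasFDerivAt (x := z))
    exact h4.add_const c
  have heq : ((1/2 : ℝ) •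
      ((fderivInnerCLM ℝ (z, A z)).comp ((ContinuousLinearMap.id ℝ E).prod A))
      + innerSL ℝ b) = InnerProductSpace.toDual ℝ E (A z + b) := by
    ext v
    simp [fderivInnerCLM, real_inner_comm, inner_add_left]
    have e1 : ⟪z, A v⟫ = (⟪v, A z⟫ : ℝ) := by
      rw [real_inner_comm]; exact hA v z
    rw [e1]; ring
  rw [heq] at h3
  exact (hasFDerivAt_iff_hasGradientAt.mp h3).gradient ▸ by simp

end GlueLemmas

/-- `[L, H] ≡ 0` implies `[L, ψ] ≡ 0` for quadratic `L`.
If `L(z) = ½⟨z, Az⟩ + ⟨b, z⟩ + c` is quadratic (`A` symmetric) and the Poisson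
bracket `[L, H](z) = ⟨∇L(z), J∇H(z)⟩` vanishes identically, then the Poisson
bracket `[L, ψ](z) = ⟨∇L(z), J∇ψ(z)⟩` vanishes identically as well. -/
theorem bracket_with_psi_vanishes (m : ℕ) (hm : 1 ≤ m)
    (A : Phase m →L[ℝ] Phase m) (hA : ∀ v w : Phase m, ⟪A v, w⟫ = ⟪v, A w⟫)
    (b : Phase m) (c : ℝ) (L : Phase m → ℝ)
    (hL : ∀ z : Phase m, L z = (1 / 2 : ℝ) * ⟪z, A z⟫ + ⟪b, z⟫ + c)
    (H : Phase m → ℝ) (hH : ContDiff ℝ 3 H)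
    (hbracket : ∀ z : Phase m, ⟪gradient L z, Jmap (gradient H z)⟫ = 0) :
    ∀ z : Phase m, ⟪gradient L z, Jmap (gradient (psi H) z)⟫ = 0 := by
  intro z
  have hgradL : ∀ y : Phase m, gradient L y = A y + b :=
    fun y => gradient_quadratic A hA b c L hL y
  have hb : ∀ y : Phase m, ⟪gradient H y, Jmap (A y + b)⟫ = 0 := by
    intro y
    have h0 := hbracket y
    rw [hgradL y] at h0
    have h1 := Jmap_skew (A y + b) (gradient H y)
    have h2 : ⟪gradient H y, Jmap (A y + b)⟫
        = ⟪Jmap (A y + b), gradient H y⟫ := real_inner_comm _ _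
    have h3 : ⟪A y + b, Jmap (gradient H y)⟫
        = ⟪gradient H y, Jmap (A y + b)⟫ + 0 := by linarith [h1, h2]
    linarith [h0, h3]
  have key := key_vanish Jmap A (fun a c => Jmap_skew a c) hA b H hH hb z
  rw [hgradL z]
  have h1 := Jmap_skew (A z + b) (gradient (psi H) z)
  have h2 : ⟪Jmap (A z + b), gradient (psi H) z⟫
      = ⟪gradient (psi H) z, Jmap (A z + b)⟫ := real_inner_comm _ _
  have h3 : ⟪gradient (psi H) z, Jmap (A z + b)⟫
      = fderiv ℝ (psi H) z (Jmap (A z + b)) := grad_inner _ _ _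
  have h4 : fderiv ℝ (psi H) z (Jmap (A z + b)) = 0 := key
  linarith [h1, h2, h3, h4]
end Generic
end
end

section
/- Let m ≥ 1 and d = 2m, let T be a d × d real symplectic matrix (i.e., Tᵀ J T = J), and let H : ℝ^d → ℝ be twice continuously differentiable. Define K : ℝ^d → ℝ by K(Z) = H(TZ), and define ψ_H(z) = ⟨J∇H(z), (Hess H(z))(J∇H(z))⟩ and ψ_K(Z) = ⟨J∇K(Z), (Hess K(Z))(J∇K(Z))⟩. Then ψ_K(Z) = ψ_H(TZ) for all Z ∈ ℝ^d. -/
noncomputable section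

open scoped RealInnerProductSpace

/-- invariance of `ψ` under linear symplectic transformations.
If `T` is a linear symplectic transformation (`Tᵀ J T = J`, i.e.
`⟨Tv, J(Tw)⟩ = ⟨v, Jw⟩` for all `v, w`) and `K(Z) = H(TZ)`,
then `ψ_K(Z) = ψ_H(TZ)` for all `Z`. -/
theorem psi_symplectic_invariance (m : ℕ) (hm : 1 ≤ m)
    (T : Phase m →L[ℝ] Phase m)
    (hT : ∀ v w : Phase m, ⟪T v, Jmap (T w)⟫ = ⟪v, Jmap w⟫)
    (H : Phase m → ℝ) (hH : ContDiff ℝ 2 H)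
    (K : Phase m → ℝ) (hK : ∀ Z : Phase m, K Z = H (T Z)) :
    ∀ Z : Phase m, psi K Z = psi H (T Z) := by
  have hKfun : K = fun Z => H (T Z) := funext hK
  subst hKfun
  set A := ContinuousLinearMap.adjoint T with hAdef
  -- J ∘ J = -1 pointwise
  have hJJ : ∀ z : Phase m, Jmap (Jmap z) = -z := by
    intro z
    simp [Jmap]
    rfl
  -- A ∘ J ∘ T = J pointwise
  have hAJT : ∀ w : Phase m, A (Jmap (T w)) = Jmap w := by
    intro w
    apply ext_inner_left ℝ
    intro v
    rw [hAdef, ContinuousLinearMap.adjoint_inner_right]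
    exact hT v w
  -- T ∘ J ∘ A = J pointwise
  have hTJ : ∀ z : Phase m, T (Jmap (A z)) = Jmap z := by
    have h1 : (-(Jmap * A)) * (Jmap * T) = 1 := by
      apply ContinuousLinearMap.ext
      intro z
      simp only [ContinuousLinearMap.mul_apply, ContinuousLinearMap.neg_apply,
        ContinuousLinearMap.one_apply]
      rw [hAJT z, hJJ z, neg_neg]
    have h2 : (Jmap * T) * (-(Jmap * A)) = 1 := by
      have h1' : ((-(Jmap * A) : Phase m →L[ℝ] Phase m) : Phase m →ₗ[ℝ] Phase m) *
          ((Jmap * T : Phase m →L[ℝ] Phase m) : Phase m →ₗ[ℝ] Phase m) = 1 := by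
        rw [← ContinuousLinearMap.coe_inj] at h1
        exact h1
      have h2' := mul_eq_one_comm.mp h1'
      rw [← ContinuousLinearMap.coe_inj]
      exact h2'
    intro z
    have h := ContinuousLinearMap.ext_iff.mp h2 z
    simp only [ContinuousLinearMap.mul_apply, ContinuousLinearMap.neg_apply,
      ContinuousLinearMap.one_apply, map_neg] at h
    have h5 : Jmap (T (Jmap (A z))) = -z := neg_eq_iff_eq_neg.mp h
    have h6 := congrArg (Jmap (m := m)) h5
    rw [hJJ, map_neg] at h6
    exact neg_injective h6
  -- differentiability facts
  have hHd : Differentiable ℝ H := hH.differentiable (by norm_num)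
  have hgH1 : ContDiff ℝ 1 (gradient H) := by
    have hfd : ContDiff ℝ 1 (fderiv ℝ H) := hH.fderiv_right (by norm_num)
    have : gradient H =
        (InnerProductSpace.toDual ℝ (Phase m)).symm ∘ (fderiv ℝ H) := rfl
    rw [this]
    exact ((InnerProductSpace.toDual ℝ
      (Phase m)).symm.toContinuousLinearEquiv.contDiff).comp hfd
  have hgHd : Differentiable ℝ (gradient H) := hgH1.differentiable one_ne_zero
  -- inner with gradient gives the fderiv
  have hinner : ∀ (x : Phase m) (w : Phase m),
      ⟪gradient H x, w⟫ = fderiv ℝ H x w := fun x w => by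
    rw [gradient]
    exact InnerProductSpace.toDual_symm_apply
  -- gradient of the composition
  have hgrad : gradient (fun Z => H (T Z)) = fun Z => A (gradient H (T Z)) := by
    apply gradient_eq
    intro x
    rw [hasGradientAt_iff_hasFDerivAt]
    have h1 : HasFDerivAt H (fderiv ℝ H (T x)) (T x) := (hHd (T x)).hasFDerivAt
    have h2 : HasFDerivAt (fun Z => H (T Z)) ((fderiv ℝ H (T x)).comp T) x :=
      h1.comp x (T.hasFDerivAt)
    refine h2.congr_fderiv ?_
    ext v
    simp only [InnerProductSpace.toDual_apply_apply, ContinuousLinearMap.coe_comp',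
      Function.comp_apply, hAdef, ContinuousLinearMap.adjoint_inner_left]
    exact (hinner (T x) (T v)).symm
  -- hessian of the composition
  have hhess : ∀ Z, hess (fun Z => H (T Z)) Z = A ∘L (hess H (T Z)) ∘L T := by
    intro Z
    rw [hess, hgrad]
    have h1 : HasFDerivAt (gradient H) (hess H (T Z)) (T Z) :=
      (hgHd (T Z)).hasFDerivAt
    have h2 : HasFDerivAt (fun Z => A (gradient H (T Z)))
        (A ∘L (hess H (T Z)) ∘L T) Z := by
      exact (A.hasFDerivAt.comp (T Z) h1 |>.comp Z T.hasFDerivAt :)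
    haveI : ContinuousSMul ℝ (Phase m) := IsBoundedSMul.continuousSMul
    exact h2.fderiv
  -- final computation
  intro Z
  rw [psi, psi, hgrad, hhess]
  set g := gradient H (T Z)
  calc ⟪Jmap (A g), (A ∘L (hess H (T Z)) ∘L T) (Jmap (A g))⟫
      = ⟪Jmap (A g), A ((hess H (T Z)) (T (Jmap (A g))))⟫ := rfl
    _ = ⟪T (Jmap (A g)), (hess H (T Z)) (T (Jmap (A g)))⟫ := by
        rw [hAdef, ContinuousLinearMap.adjoint_inner_right]
    _ = ⟪Jmap g, (hess H (T Z)) (Jmap g)⟫ := by rw [hTJ (g)]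
end
end
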